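/- For any probability measure D on X×Y and any probability measure Q on H with r_D(Q) < 1/2, if r_D(Q) > d_D(Q) then 2·r_D(Q) ≤ C_D(Q) ≤ 4·e_D(Q), where C_D(Q) = 1 − (1 − 2·r_D(Q))² / (1 − 2·d_D(Q)). -/

import Mathlib

open MeasureTheory

variable {X H : Type*} [MeasurableSpace X] [MeasurableSpace H]

/-- Gibbs risk: `r_D(Q) = E_{h~Q} P_{(x,y)~D}[h(x) ≠ y]`. -/
noncomputable def gibbsRisk (D : Measure (X × ℝ)) (Q : Measure H) (f : H → X → ℝ) : ℝ :=
  ∫ h, (D {p | f h p.1 ≠ p.2}).toReal ∂Q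

/-- Expected disagreement: `d_D(Q) = E_{h1~Q} E_{h2~Q} P_{x~D_X}[h1(x) ≠ h2(x)]`. -/
noncomputable def disagreement (D : Measure (X × ℝ)) (Q : Measure H) (f : H → X → ℝ) : ℝ :=
  ∫ h₁, ∫ h₂, ((D.map Prod.fst) {x | f h₁ x ≠ f h₂ x}).toReal ∂Q ∂Q

/-- Expected joint error: `e_D(Q) = E_{h1~Q} E_{h2~Q} P_{(x,y)~D}[h1(x) ≠ y ∧ h2(x) ≠ y]`. -/
noncomputable def jointError (D : Measure (X × ℝ)) (Q : Measure H) (f : H → X → ℝ) : ℝ :=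
  ∫ h₁, ∫ h₂, (D {p | f h₁ p.1 ≠ p.2 ∧ f h₂ p.1 ≠ p.2}).toReal ∂Q ∂Q


/-- If `r_D(Q) < 1/2` and `r_D(Q) > d_D(Q)` then `2·r_D(Q) ≤ C_D(Q) ≤ 4·e_D(Q)`,
where `C_D(Q) = 1 − (1 − 2·r_D(Q))²/(1 − 2·d_D(Q))`. -/
theorem two_gibbs_le_cbound_le_four_jointError
    (D : Measure (X × ℝ)) [IsProbabilityMeasure D]
    (Q : Measure H) [IsProbabilityMeasure Q]
    (f : H → X → ℝ)
    (hf : Measurable fun p : H × X => f p.1 p.2)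
    (hvals : ∀ h x, f h x = 1 ∨ f h x = -1)
    (hlabels : ∀ᵐ p ∂D, p.2 = 1 ∨ p.2 = -1)
    (hr : gibbsRisk D Q f < 1 / 2)
    (hrd : disagreement D Q f < gibbsRisk D Q f) :
    2 * gibbsRisk D Q f ≤
        1 - (1 - 2 * gibbsRisk D Q f) ^ 2 / (1 - 2 * disagreement D Q f) ∧
    1 - (1 - 2 * gibbsRisk D Q f) ^ 2 / (1 - 2 * disagreement D Q f) ≤
        4 * jointError D Q f := by
  simp only [gibbsRisk, disagreement, jointError] at hr hrd ⊢
  haveI : IsProbabilityMeasure (D.map Prod.fst) :=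
    Measure.isProbabilityMeasure_map measurable_fst.aemeasurable
  -- section measurability
  have hsec : ∀ h : H, Measurable (f h) := fun h =>
    hf.comp (measurable_const.prodMk measurable_id)
  -- measurable sets
  have mA : ∀ h : H, MeasurableSet {p : X × ℝ | f h p.1 ≠ p.2} := fun h =>
    (measurableSet_eq_fun ((hsec h).comp measurable_fst) measurable_snd).compl
  have mAB : ∀ h₁ h₂ : H,
      MeasurableSet {p : X × ℝ | f h₁ p.1 ≠ p.2 ∧ f h₂ p.1 ≠ p.2} := fun h₁ h₂ =>
    (mA h₁).inter (mA h₂)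
  have mC : ∀ h₁ h₂ : H, MeasurableSet {x : X | f h₁ x ≠ f h₂ x} := fun h₁ h₂ =>
    (measurableSet_eq_fun (hsec h₁) (hsec h₂)).compl
  -- pointwise measure identity
  have key : ∀ h₁ h₂ : H,
      (D {p | f h₁ p.1 ≠ p.2}).toReal + (D {p | f h₂ p.1 ≠ p.2}).toReal
        = 2 * (D {p | f h₁ p.1 ≠ p.2 ∧ f h₂ p.1 ≠ p.2}).toReal
          + ((D.map Prod.fst) {x | f h₁ x ≠ f h₂ x}).toReal := by
    intro h₁ h₂
    set A := {p : X × ℝ | f h₁ p.1 ≠ p.2}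
    set B := {p : X × ℝ | f h₂ p.1 ≠ p.2}
    set C := {p : X × ℝ | f h₁ p.1 ≠ f h₂ p.1}
    have hmapC : (D.map Prod.fst) {x | f h₁ x ≠ f h₂ x} = D C := by
      rw [Measure.map_apply measurable_fst (mC h₁ h₂)]; rfl
    have hCmeas : MeasurableSet C :=
      (measurableSet_eq_fun ((hsec h₁).comp measurable_fst)
        ((hsec h₂).comp measurable_fst)).compl
    -- (A ∩ B) ∩ C is null
    have hbad : D {p : X × ℝ | ¬(p.2 = 1 ∨ p.2 = -1)} = 0 := by
      exact hlabels
    have hnull : D ((A ∩ B) ∩ C) = 0 := by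
      refine measure_mono_null ?_ hbad
      rintro p ⟨⟨ha, hb⟩, hc⟩ hy
      simp only [A, B, C, Set.mem_setOf_eq] at ha hb hc
      rcases hvals h₁ p.1 with e1 | e1 <;> rcases hvals h₂ p.1 with e2 | e2 <;>
        rcases hy with e3 | e3 <;> simp_all
    -- A ∪ B =ᵐ (A ∩ B) ∪ C
    have hae : (A ∪ B : Set (X × ℝ)) =ᵐ[D] ((A ∩ B) ∪ C : Set (X × ℝ)) := by
      rw [Filter.eventuallyEq_set]
      filter_upwards [hlabels] with p hp
      simp only [Set.mem_union, Set.mem_inter_iff, A, B, C, Set.mem_setOf_eq]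
      rcases hvals h₁ p.1 with e1 | e1 <;> rcases hvals h₂ p.1 with e2 | e2 <;>
        rcases hp with e3 | e3 <;> rw [e1, e2, e3] <;> norm_num
    have h1 : D (A ∪ B) + D (A ∩ B) = D A + D B :=
      measure_union_add_inter A (mA h₂)
    have h2 : D ((A ∩ B) ∪ C) + D ((A ∩ B) ∩ C) = D (A ∩ B) + D C :=
      measure_union_add_inter (A ∩ B) hCmeas
    have h3 : D (A ∪ B) = D (A ∩ B) + D C := by
      rw [measure_congr hae]; rw [hnull, add_zero] at h2; exact h2
    have hfin : ∀ s : Set (X × ℝ), D s ≠ ⊤ := fun s => measure_ne_top D s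
    have h4 : D A + D B = 2 * D (A ∩ B) + D C := by
      rw [← h1, h3]; ring
    rw [hmapC]
    have := congrArg ENNReal.toReal h4
    rw [ENNReal.toReal_add (hfin A) (hfin B),
      ENNReal.toReal_add (by finiteness) (hfin C),
      ENNReal.toReal_mul] at this
    simp at this; exact this
  -- abbreviations
  set g : H → ℝ := fun h => (D {p | f h p.1 ≠ p.2}).toReal with hg
  set k : H → H → ℝ :=
    fun h₁ h₂ => (D {p | f h₁ p.1 ≠ p.2 ∧ f h₂ p.1 ≠ p.2}).toReal with hk
  set c : H → H → ℝ :=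
    fun h₁ h₂ => ((D.map Prod.fst) {x | f h₁ x ≠ f h₂ x}).toReal with hc
  -- measurability of the parametrized measures
  have mg : Measurable g := by
    have mS : MeasurableSet {q : H × (X × ℝ) | f q.1 q.2.1 ≠ q.2.2} :=
      (measurableSet_eq_fun
        (hf.comp (measurable_fst.prodMk (measurable_fst.comp measurable_snd)))
        (measurable_snd.comp measurable_snd)).compl
    exact (measurable_measure_prodMk_left mS).ennreal_toReal
  have mK : Measurable fun hh : H × H => k hh.1 hh.2 := by
    have mT : MeasurableSet
        {q : (H × H) × (X × ℝ) | f q.1.1 q.2.1 ≠ q.2.2 ∧ f q.1.2 q.2.1 ≠ q.2.2} := by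
      refine MeasurableSet.inter ?_ ?_
      · exact (measurableSet_eq_fun
          (hf.comp ((measurable_fst.comp measurable_fst).prodMk
            (measurable_fst.comp measurable_snd)))
          (measurable_snd.comp measurable_snd)).compl
      · exact (measurableSet_eq_fun
          (hf.comp ((measurable_snd.comp measurable_fst).prodMk
            (measurable_fst.comp measurable_snd)))
          (measurable_snd.comp measurable_snd)).compl
    exact (measurable_measure_prodMk_left mT).ennreal_toReal
  have mC2 : Measurable fun hh : H × H => c hh.1 hh.2 := by
    have mU : MeasurableSet {q : (H × H) × X | f q.1.1 q.2 ≠ f q.1.2 q.2} := by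
      refine (measurableSet_eq_fun ?_ ?_).compl
      · exact hf.comp ((measurable_fst.comp measurable_fst).prodMk measurable_snd)
      · exact hf.comp ((measurable_snd.comp measurable_fst).prodMk measurable_snd)
    exact (measurable_measure_prodMk_left mU).ennreal_toReal
  -- boundedness
  have bndD : ∀ s : Set (X × ℝ), ‖(D s).toReal‖ ≤ 1 := by
    intro s
    rw [Real.norm_eq_abs, abs_of_nonneg ENNReal.toReal_nonneg]
    calc (D s).toReal ≤ (1 : ENNReal).toReal :=
          ENNReal.toReal_mono ENNReal.one_ne_top prob_le_one
      _ = 1 := by simp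
  have bndM : ∀ s : Set X, ‖((D.map Prod.fst) s).toReal‖ ≤ 1 := by
    intro s
    rw [Real.norm_eq_abs, abs_of_nonneg ENNReal.toReal_nonneg]
    calc ((D.map Prod.fst) s).toReal ≤ (1 : ENNReal).toReal :=
          ENNReal.toReal_mono ENNReal.one_ne_top prob_le_one
      _ = 1 := by simp
  -- integrabilities
  have int_g : Integrable g Q :=
    ⟨mg.aestronglyMeasurable,
      HasFiniteIntegral.of_bounded (C := 1) (Filter.Eventually.of_forall fun h =>
        show ‖(D {p | f h p.1 ≠ p.2}).toReal‖ ≤ 1 from bndD _)⟩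
  have int_k : ∀ h₁, Integrable (k h₁) Q := fun h₁ =>
    ⟨(mK.comp (measurable_const.prodMk measurable_id)).aestronglyMeasurable,
      HasFiniteIntegral.of_bounded (C := 1) (Filter.Eventually.of_forall fun h =>
        show ‖(D {p | f h₁ p.1 ≠ p.2 ∧ f h p.1 ≠ p.2}).toReal‖ ≤ 1 from bndD _)⟩
  have int_c : ∀ h₁, Integrable (c h₁) Q := fun h₁ =>
    ⟨(mC2.comp (measurable_const.prodMk measurable_id)).aestronglyMeasurable,
      HasFiniteIntegral.of_bounded (C := 1)
        (Filter.Eventually.of_forall fun h =>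
          show ‖((D.map Prod.fst) {x | f h₁ x ≠ f h x}).toReal‖ ≤ 1 from bndM _)⟩
  have int_K : Integrable (fun h₁ => ∫ h₂, k h₁ h₂ ∂Q) Q := by
    refine ⟨((show StronglyMeasurable (Function.uncurry k) from mK.stronglyMeasurable).integral_prod_right).aestronglyMeasurable, ?_⟩
    refine HasFiniteIntegral.of_bounded (C := 1) (Filter.Eventually.of_forall fun h₁ => ?_)
    calc ‖∫ h₂, k h₁ h₂ ∂Q‖ ≤ 1 * (Q Set.univ).toReal :=
          norm_integral_le_of_norm_le_const (Filter.Eventually.of_forall fun h₂ =>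
            show ‖(D {p | f h₁ p.1 ≠ p.2 ∧ f h₂ p.1 ≠ p.2}).toReal‖ ≤ 1 from bndD _)
      _ = 1 := by simp
  have int_C : Integrable (fun h₁ => ∫ h₂, c h₁ h₂ ∂Q) Q := by
    refine ⟨((show StronglyMeasurable (Function.uncurry c) from mC2.stronglyMeasurable).integral_prod_right).aestronglyMeasurable, ?_⟩
    refine HasFiniteIntegral.of_bounded (C := 1) (Filter.Eventually.of_forall fun h₁ => ?_)
    calc ‖∫ h₂, c h₁ h₂ ∂Q‖ ≤ 1 * (Q Set.univ).toReal :=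
          norm_integral_le_of_norm_le_const
            (Filter.Eventually.of_forall fun h₂ =>
              show ‖((D.map Prod.fst) {x | f h₁ x ≠ f h₂ x}).toReal‖ ≤ 1 from bndM _)
      _ = 1 := by simp
  -- the main identity : 2 r = 2 e + d
  set r : ℝ := ∫ h, g h ∂Q with hrdef
  have inner : ∀ h₁, g h₁ + r = 2 * (∫ h₂, k h₁ h₂ ∂Q) + ∫ h₂, c h₁ h₂ ∂Q := by
    intro h₁
    have e1 : ∫ h₂, (g h₁ + g h₂) ∂Q = g h₁ + r := by
      rw [integral_add (integrable_const _) int_g, integral_const]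
      simp [hrdef]
    have e2 : ∫ h₂, (g h₁ + g h₂) ∂Q = ∫ h₂, (2 * k h₁ h₂ + c h₁ h₂) ∂Q := by
      refine integral_congr_ae (Filter.Eventually.of_forall fun h₂ => ?_)
      simpa [hg, hk, hc, two_mul] using key h₁ h₂
    rw [← e1, e2, integral_add ((int_k h₁).const_mul 2) (int_c h₁), integral_const_mul]
  have main : 2 * r = 2 * (∫ h₁, ∫ h₂, k h₁ h₂ ∂Q ∂Q) + ∫ h₁, ∫ h₂, c h₁ h₂ ∂Q ∂Q := by
    have : ∫ h₁, (g h₁ + r) ∂Q = 2 * r := by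
      rw [integral_add int_g (integrable_const _), integral_const]
      simp [hrdef]; ring
    rw [← this, integral_congr_ae (Filter.Eventually.of_forall inner),
      integral_add (int_K.const_mul 2) int_C, integral_const_mul]
  set E := ∫ h₁, ∫ h₂, k h₁ h₂ ∂Q ∂Q with hE
  set Dd := ∫ h₁, ∫ h₂, c h₁ h₂ ∂Q ∂Q with hDd
  have hb : 0 < 1 - 2 * Dd := by linarith
  have ha : 0 < 1 - 2 * r := by linarith
  have ht : (1 - 2 * r) ^ 2 / (1 - 2 * Dd) * (1 - 2 * Dd) = (1 - 2 * r) ^ 2 :=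
    div_mul_cancel₀ _ (ne_of_gt hb)
  constructor
  · nlinarith [ht, hb, ha, sq_nonneg (1 - 2 * r),
      mul_nonneg ha.le (by linarith : (0:ℝ) ≤ (1 - 2 * Dd) - (1 - 2 * r))]
  · nlinarith [ht, hb, ha, sq_nonneg ((1 - 2 * r) - (1 - 2 * Dd))]
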